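/- (Markov chain tree theorem / Broder–Aldous) For a finite strongly connected directed multigraph G, the vector κ whose v-th entry κ_v counts the spanning trees of G oriented toward v satisfies Δκ = 0, where Δ is the graph Laplacian. -/

import Mathlib

open Finset

structure Multigraph (V E : Type) where
  tail : E → V
  head : E → V

namespace Multigraph

variable {V E : Type} [Fintype V] [Fintype E] [DecidableEq V] [DecidableEq E]

/-- Outdegree of a vertex. -/
def outdeg (G : Multigraph V E) (v : V) : ℕ :=
  (Finset.univ.filter (fun e => G.tail e = v)).card

/-- Indegree of a vertex. -/
def indeg (G : Multigraph V E) (v : V) : ℕ :=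
  (Finset.univ.filter (fun e => G.head e = v)).card

/-- Number of edges from `u` to `v`. -/
def edgeCount (G : Multigraph V E) (u v : V) : ℕ :=
  (Finset.univ.filter (fun e => G.tail e = u ∧ G.head e = v)).card

/-- Directed graph Laplacian: `Δ u v = d_v δ_{uv} − d_{vu}`. -/
def laplacian (G : Multigraph V E) : Matrix V V ℤ :=
  fun u v => (if u = v then (G.outdeg v : ℤ) else 0) - (G.edgeCount v u : ℤ)

def Adj (G : Multigraph V E) (u v : V) : Prop := ∃ e, G.tail e = u ∧ G.head e = v

/-- Strong connectivity: every vertex reaches every other by a directed path. -/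
def StronglyConnected (G : Multigraph V E) : Prop :=
  ∀ u v : V, Relation.ReflTransGen G.Adj u v

/-- A list of edges forms a walk: consecutive edges are incident. -/
def IsWalk (G : Multigraph V E) : List E → Prop
  | [] => True
  | [_] => True
  | e :: f :: rest => G.head e = G.tail f ∧ G.IsWalk (f :: rest)

/-- A nonempty walk that returns to its starting vertex. -/
def IsClosedWalk (G : Multigraph V E) (w : List E) : Prop :=
  w ≠ [] ∧ G.IsWalk w ∧ w.getLast?.map G.head = w.head?.map G.tail

/-- The walk starts at vertex `v`. -/
def StartsAt (G : Multigraph V E) (w : List E) (v : V) : Prop :=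
  w.head?.map G.tail = some v

/-- A π-Eulerian tour: closed walk using each edge `e` exactly `π (tail e)` times. -/
def IsPiEulerian (G : Multigraph V E) (π : V → ℕ) (w : List E) : Prop :=
  G.IsClosedWalk w ∧ ∀ e : E, w.count e = π (G.tail e)

/-- An Eulerian tour: closed walk using each edge exactly once. -/
def IsEulerian (G : Multigraph V E) (w : List E) : Prop :=
  G.IsClosedWalk w ∧ ∀ e : E, w.count e = 1

/-- A multi-Eulerian tour: closed walk using each edge at least once, and edges
with the same tail equally often. -/
def IsMultiEulerian (G : Multigraph V E) (w : List E) : Prop :=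
  G.IsClosedWalk w ∧ (∀ e : E, 1 ≤ w.count e) ∧
  ∀ e f : E, G.tail e = G.tail f → w.count e = w.count f

/-- A spanning tree oriented toward `w`: every vertex other than `w` has exactly one
outgoing edge, `w` has none, and every vertex reaches `w` inside the subgraph. -/
def IsTreeTo (G : Multigraph V E) (w : V) (T : Finset E) : Prop :=
  (∀ v, v ≠ w → (T.filter (fun e => G.tail e = v)).card = 1) ∧
  (∀ e ∈ T, G.tail e ≠ w) ∧
  ∀ v : V, Relation.ReflTransGen (fun a b => ∃ e ∈ T, G.tail e = a ∧ G.head e = b) v w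

/-- Number of spanning trees oriented toward `w`. -/
noncomputable def treeCount (G : Multigraph V E) (w : V) : ℕ :=
  Nat.card {T : Finset E // G.IsTreeTo w T}

end Multigraph


namespace Multigraph

variable {V E : Type} [Fintype V] [Fintype E] [DecidableEq V] [DecidableEq E]

section Aux

variable (G : Multigraph V E)
set_option linter.unusedSectionVars false

open scoped Classical in
/-- The functional map: follow the unique edge of `T` out of `w`, except at the
root `r` use `f`. -/
noncomputable def sig (T : Finset E) (r : V) (f : E) (w : V) : E :=
  if w = r then f else if h : ∃ e, e ∈ T ∧ G.tail e = w then h.choose else f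

lemma sig_root (T : Finset E) (r : V) (f : E) : G.sig T r f r = f := by
  simp [sig]

lemma sig_spec {T : Finset E} {r w : V} (f : E) (hw : w ≠ r)
    (hc : (T.filter (fun e => G.tail e = w)).card = 1) :
    G.sig T r f w ∈ T ∧ G.tail (G.sig T r f w) = w := by
  classical
  have hne : ∃ e, e ∈ T ∧ G.tail e = w := by
    obtain ⟨a, ha⟩ := Finset.card_eq_one.mp hc
    refine ⟨a, ?_⟩
    have := Finset.mem_filter.mp (ha ▸ Finset.mem_singleton_self a)
    exact ⟨this.1, this.2⟩
  rw [sig, if_neg hw, dif_pos hne]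
  exact hne.choose_spec

lemma sig_eq {T : Finset E} {r w : V} (f : E) (hw : w ≠ r)
    (hc : (T.filter (fun e => G.tail e = w)).card = 1)
    {e : E} (he : e ∈ T) (ht : G.tail e = w) : G.sig T r f w = e := by
  obtain ⟨a, ha⟩ := Finset.card_eq_one.mp hc
  have h1 : G.sig T r f w ∈ T.filter (fun e => G.tail e = w) :=
    Finset.mem_filter.mpr ⟨(G.sig_spec f hw hc).1, (G.sig_spec f hw hc).2⟩
  have h2 : e ∈ T.filter (fun e => G.tail e = w) := Finset.mem_filter.mpr ⟨he, ht⟩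
  rw [ha, Finset.mem_singleton] at h1 h2
  rw [h1, h2]

lemma sig_of_mem {T : Finset E} {r : V} (f : E)
    (hcard : ∀ v, v ≠ r → (T.filter (fun e => G.tail e = v)).card = 1)
    (htails : ∀ e ∈ T, G.tail e ≠ r)
    {e : E} (he : e ∈ T) : G.sig T r f (G.tail e) = e :=
  G.sig_eq f (htails e he) (hcard _ (htails e he)) he rfl

/-- From reachability in `T` to reachability by iterating a compatible functional map. -/
lemma reach_to_iter {T : Finset E} {σ : V → E} (hσ : ∀ e ∈ T, σ (G.tail e) = e)
    {w r : V}
    (h : Relation.ReflTransGen (fun a b => ∃ e ∈ T, G.tail e = a ∧ G.head e = b) w r) :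
    ∃ n, (fun x => G.head (σ x))^[n] w = r := by
  induction h using Relation.ReflTransGen.head_induction_on with
  | refl => exact ⟨0, rfl⟩
  | head hab _ ih =>
    obtain ⟨e, heT, hta, hhb⟩ := hab
    obtain ⟨n, hn⟩ := ih
    refine ⟨n + 1, ?_⟩
    rw [Function.iterate_succ_apply]
    have : σ _ = e := hta ▸ hσ e heT
    simpa [this, hhb] using hn

lemma iter_to_reach {σ : V → E} (hσ : ∀ x, G.tail (σ x) = x) (r : V) :
    ∀ (n : ℕ) (w : V), (fun x => G.head (σ x))^[n] w = r →
    Relation.ReflTransGen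
      (fun a b => ∃ e ∈ Finset.image σ (Finset.univ.erase r), G.tail e = a ∧ G.head e = b)
      w r := by
  intro n
  induction n with
  | zero => intro w hw; exact hw ▸ Relation.ReflTransGen.refl
  | succ n ih =>
    intro w hw
    by_cases hwr : w = r
    · exact hwr ▸ Relation.ReflTransGen.refl
    · refine Relation.ReflTransGen.head ⟨σ w, ?_, hσ w, rfl⟩ (ih _ ?_)
      · exact Finset.mem_image.mpr ⟨w, Finset.mem_erase.mpr ⟨hwr, Finset.mem_univ w⟩, rfl⟩
      · rw [Function.iterate_succ_apply] at hw; exact hw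

lemma filter_image {σ : V → E} (hσ : ∀ x, G.tail (σ x) = x) {r w : V} (hw : w ≠ r) :
    (Finset.image σ (Finset.univ.erase r)).filter (fun e => G.tail e = w) = {σ w} := by
  ext e
  simp only [Finset.mem_filter, Finset.mem_image, Finset.mem_erase, Finset.mem_univ,
    Finset.mem_singleton, true_and, and_true]
  constructor
  · rintro ⟨⟨x, hx, rfl⟩, ht⟩
    rw [hσ x] at ht; rw [ht]
  · rintro rfl
    exact ⟨⟨w, hw, rfl⟩, hσ w⟩

/-- The image of a functional map off the root is a tree toward the root, provided
every vertex iterates to the root. -/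
lemma isTree_image {σ : V → E} (hσ : ∀ x, G.tail (σ x) = x) (r : V)
    (hreach : ∀ w, ∃ n, (fun x => G.head (σ x))^[n] w = r) :
    G.IsTreeTo r (Finset.image σ (Finset.univ.erase r)) := by
  refine ⟨fun v hv => by rw [G.filter_image hσ hv]; simp, ?_, ?_⟩
  · rintro e he
    obtain ⟨x, hx, rfl⟩ := Finset.mem_image.mp he
    rw [hσ x]
    exact (Finset.mem_erase.mp hx).1
  · intro v
    obtain ⟨n, hn⟩ := hreach v
    exact G.iter_to_reach hσ r n v hn

lemma tree_eq_image {T : Finset E} {r : V} {σ : V → E}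
    (hcard : ∀ v, v ≠ r → (T.filter (fun e => G.tail e = v)).card = 1)
    (htails : ∀ e ∈ T, G.tail e ≠ r)
    (hσT : ∀ e ∈ T, σ (G.tail e) = e) (hσ : ∀ x, G.tail (σ x) = x) :
    T = Finset.image σ (Finset.univ.erase r) := by
  ext e
  simp only [Finset.mem_image, Finset.mem_erase, Finset.mem_univ, true_and, and_true]
  constructor
  · intro he
    exact ⟨G.tail e, htails e he, hσT e he⟩
  · rintro ⟨x, hx, rfl⟩
    have hc := hcard x hx
    obtain ⟨a, ha⟩ := Finset.card_eq_one.mp hc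
    have haf := Finset.mem_filter.mp (ha ▸ Finset.mem_singleton_self a)
    have : σ x = a := by
      have := hσT a haf.1
      rw [haf.2] at this
      exact this
    rw [this]; exact haf.1

end Aux

end Multigraph

namespace Multigraph

variable {V E : Type} [Fintype V] [Fintype E] [DecidableEq V] [DecidableEq E]
variable (G : Multigraph V E)
set_option linter.unusedSectionVars false

/-- Functional maps all of whose iterates reach `u`. -/
def AFun (u : V) : Type :=
  {σ : V → E // (∀ x, G.tail (σ x) = x) ∧ ∀ w, ∃ n, (fun x => G.head (σ x))^[n] w = u}

lemma sig_tails {T : Finset E} {r : V} {f : E} (hf : G.tail f = r)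
    (hT : G.IsTreeTo r T) : ∀ x, G.tail (G.sig T r f x) = x := by
  intro x
  by_cases hx : x = r
  · subst hx; rw [G.sig_root]; exact hf
  · exact (G.sig_spec f hx (hT.1 x hx)).2

lemma sig_image {σ : V → E} (hσ : ∀ x, G.tail (σ x) = x) (r : V) :
    G.sig (Finset.image σ (Finset.univ.erase r)) r (σ r) = σ := by
  funext w
  by_cases hw : w = r
  · subst hw; exact G.sig_root _ _ _
  · exact G.sig_eq _ hw (by rw [G.filter_image hσ hw]; simp)
      (Finset.mem_image.mpr ⟨w, by simp [hw], rfl⟩) (hσ w)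

lemma card_left (u : V) :
    Nat.card ({e : E // G.tail e = u} × {T : Finset E // G.IsTreeTo u T})
      = Nat.card (G.AFun u) := by
  classical
  have wd : ∀ (p : {e : E // G.tail e = u} × {T : Finset E // G.IsTreeTo u T}),
      (∀ x, G.tail (G.sig p.2.1 u p.1.1 x) = x) ∧
        ∀ w, ∃ n, (fun x => G.head (G.sig p.2.1 u p.1.1 x))^[n] w = u := by
    rintro ⟨⟨e, he⟩, ⟨T, hT⟩⟩
    refine ⟨G.sig_tails he hT, fun w => ?_⟩
    exact G.reach_to_iter (fun e' he' => G.sig_of_mem _ hT.1 hT.2.1 he') (hT.2.2 w)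
  refine Nat.card_eq_of_bijective (fun p => ⟨G.sig p.2.1 u p.1.1, wd p⟩) ⟨?_, ?_⟩
  · rintro ⟨⟨e, he⟩, ⟨T, hT⟩⟩ ⟨⟨e', he'⟩, ⟨T', hT'⟩⟩ h
    have hs : G.sig T u e = G.sig T' u e' := congrArg Subtype.val h
    have hee : e = e' := by
      have := congrFun hs u
      rwa [G.sig_root, G.sig_root] at this
    have hσ := G.sig_tails he hT
    have hσ' := G.sig_tails he' hT'
    have hTT : T = T' := by
      rw [G.tree_eq_image hT.1 hT.2.1 (fun e' he'' => G.sig_of_mem _ hT.1 hT.2.1 he'') hσ,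
        G.tree_eq_image hT'.1 hT'.2.1 (fun e'' he'' => G.sig_of_mem _ hT'.1 hT'.2.1 he'') hσ', hs]
    simp only [Prod.mk.injEq, Subtype.mk.injEq]
    exact ⟨hee, hTT⟩
  · rintro ⟨σ, hσ, hreach⟩
    refine ⟨(⟨σ u, hσ u⟩, ⟨Finset.image σ (Finset.univ.erase u),
      G.isTree_image hσ u hreach⟩), ?_⟩
    exact Subtype.ext (G.sig_image hσ u)

lemma sigma_ext {u : V}
    {a b : Σ v : V, ({f : E // G.tail f = v ∧ G.head f = u} ×
      {T : Finset E // G.IsTreeTo v T})}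
    (h1 : a.2.1.1 = b.2.1.1) (h2 : a.2.2.1 = b.2.2.1) : a = b := by
  obtain ⟨va, ⟨⟨fa, hfa1, hfa2⟩, ⟨Ta, hTa⟩⟩⟩ := a
  obtain ⟨vb, ⟨⟨fb, hfb1, hfb2⟩, ⟨Tb, hTb⟩⟩⟩ := b
  dsimp at h1 h2
  subst h1; subst h2; subst hfa1; subst hfb1
  rfl

lemma card_right (u : V) :
    Nat.card (G.AFun u)
      = Nat.card (Σ v : V, ({f : E // G.tail f = v ∧ G.head f = u} ×
          {T : Finset E // G.IsTreeTo v T})) := by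
  classical
  have hPex : ∀ s : G.AFun u, ∃ n, (fun x => G.head (s.1 x))^[n+1] u = u := by
    rintro s
    obtain ⟨m, hm⟩ := s.2.2 (G.head (s.1 u))
    exact ⟨m, by rw [Function.iterate_succ_apply]; exact hm⟩
  let cv : G.AFun u → V := fun s => (fun x => G.head (s.1 x))^[Nat.find (hPex s)] u
  have hcv : ∀ s : G.AFun u, G.head (s.1 (cv s)) = u := by
    intro s
    have h := Nat.find_spec (hPex s)
    rw [Function.iterate_succ_apply'] at h
    exact h
  have hreachcv : ∀ (s : G.AFun u) w, ∃ n, (fun x => G.head (s.1 x))^[n] w = cv s := by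
    intro s w
    obtain ⟨m, hm⟩ := s.2.2 w
    exact ⟨Nat.find (hPex s) + m, by rw [Function.iterate_add_apply, hm]⟩
  refine Nat.card_eq_of_bijective (fun s => ⟨cv s, ⟨⟨s.1 (cv s), s.2.1 _, hcv s⟩,
    ⟨Finset.image s.1 (Finset.univ.erase (cv s)), G.isTree_image s.2.1 _ (hreachcv s)⟩⟩⟩)
    ⟨?_, ?_⟩
  · -- injective
    intro s t h
    have hf : s.1 (cv s) = t.1 (cv t) :=
      congrArg (fun z : Σ v : V, ({f : E // G.tail f = v ∧ G.head f = u} ×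
        {T : Finset E // G.IsTreeTo v T}) => z.2.1.1) h
    have hT : Finset.image s.1 (Finset.univ.erase (cv s))
        = Finset.image t.1 (Finset.univ.erase (cv t)) :=
      congrArg (fun z : Σ v : V, ({f : E // G.tail f = v ∧ G.head f = u} ×
        {T : Finset E // G.IsTreeTo v T}) => z.2.2.1) h
    have hcveq : cv s = cv t := by
      have h1 := s.2.1 (cv s)
      have h2 := t.2.1 (cv t)
      rw [← h1, hf, h2]
    apply Subtype.ext
    funext w
    by_cases hw : w = cv s
    · subst hw; rw [hf, hcveq]
    · have hmem : s.1 w ∈ Finset.image t.1 (Finset.univ.erase (cv t)) := by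
        rw [← hT]
        exact Finset.mem_image.mpr ⟨w, by simp [hw], rfl⟩
      obtain ⟨x, hx, hxe⟩ := Finset.mem_image.mp hmem
      have : x = w := by
        have := t.2.1 x
        rw [hxe, s.2.1 w] at this
        exact this.symm
      rw [← hxe, this]
  · -- surjective
    rintro ⟨v, ⟨⟨f, hf1, hf2⟩, ⟨T, hT⟩⟩⟩
    set σ := G.sig T v f with hσdef
    have hσ : ∀ x, G.tail (σ x) = x := G.sig_tails hf1 hT
    have hσT : ∀ e ∈ T, σ (G.tail e) = e := fun e he => G.sig_of_mem _ hT.1 hT.2.1 he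
    have hroot : σ v = f := G.sig_root _ _ _
    have hreach_v : ∀ w, ∃ n, (fun x => G.head (σ x))^[n] w = v :=
      fun w => G.reach_to_iter hσT (hT.2.2 w)
    have hstepv : G.head (σ v) = u := by rw [hroot]; exact hf2
    have hreach_u : ∀ w, ∃ n, (fun x => G.head (σ x))^[n] w = u := by
      intro w
      obtain ⟨n, hn⟩ := hreach_v w
      exact ⟨n + 1, by rw [Function.iterate_succ_apply', hn]; exact hstepv⟩
    refine ⟨⟨σ, hσ, hreach_u⟩, ?_⟩
    set s : G.AFun u := ⟨σ, hσ, hreach_u⟩ with hsdef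
    have hcveq : cv s = v := by
      set p := Nat.find (hPex s) with hpdef
      have hp : (fun x => G.head (σ x))^[p+1] u = u := Nat.find_spec (hPex s)
      have hper : Function.IsPeriodicPt (fun x => G.head (σ x)) (p+1) u := hp
      obtain ⟨m, hm⟩ := hreach_v u
      have hj : (fun x => G.head (σ x))^[m % (p+1)] u = v := by
        rw [hper.iterate_mod_apply m]; exact hm
      have hjle : m % (p+1) ≤ p := Nat.lt_succ_iff.mp (Nat.mod_lt m (Nat.succ_pos p))
      have hPj : (fun x => G.head (σ x))^[(m % (p+1))+1] u = u := by
        rw [Function.iterate_succ_apply', hj]; exact hstepv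
      have hple : p ≤ m % (p+1) := Nat.find_min' (hPex s) hPj
      have : m % (p+1) = p := le_antisymm hjle hple
      show (fun x => G.head (σ x))^[p] u = v
      rw [← this]; exact hj
    refine G.sigma_ext ?_ ?_
    · show σ (cv s) = f
      rw [hcveq]; exact hroot
    · show Finset.image σ (Finset.univ.erase (cv s)) = T
      rw [hcveq]
      exact (G.tree_eq_image hT.1 hT.2.1 hσT hσ).symm

lemma natCard_sigma {ι : Type} [Fintype ι] (α : ι → Type) [∀ i, Finite (α i)] :
    Nat.card (Σ i, α i) = ∑ i, Nat.card (α i) := by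
  letI : ∀ i, Fintype (α i) := fun i => Fintype.ofFinite _
  simp [Nat.card_eq_fintype_card]

lemma natCard_filter (p : E → Prop) [DecidablePred p] :
    Nat.card {e : E // p e} = (Finset.univ.filter p).card := by
  simp [Nat.card_eq_fintype_card, Fintype.card_subtype]

end Multigraph

namespace Multigraph

variable {V E : Type} [Fintype V] [Fintype E] [DecidableEq V] [DecidableEq E]
variable (G : Multigraph V E)
set_option linter.unusedSectionVars false

lemma key_count (u : V) :
    G.outdeg u * G.treeCount u = ∑ v, G.edgeCount v u * G.treeCount v := by
  classical
  have h1 : G.outdeg u * G.treeCount u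
      = Nat.card ({e : E // G.tail e = u} × {T : Finset E // G.IsTreeTo u T}) := by
    rw [Nat.card_prod, natCard_filter]
    rfl
  have h2 : ∀ v, G.edgeCount v u * G.treeCount v
      = Nat.card ({f : E // G.tail f = v ∧ G.head f = u} ×
          {T : Finset E // G.IsTreeTo v T}) := by
    intro v
    rw [Nat.card_prod, natCard_filter]
    rfl
  rw [h1, G.card_left u, G.card_right u, natCard_sigma]
  exact Finset.sum_congr rfl (fun v _ => (h2 v).symm)

end Multigraph


theorem stmt8 {V E : Type} [Fintype V] [Fintype E] [DecidableEq V] [DecidableEq E]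
    (G : Multigraph V E) (hsc : G.StronglyConnected) :
    G.laplacian.mulVec (fun v => (G.treeCount v : ℤ)) = 0 := by
  funext u
  have hkey := G.key_count u
  show ∑ v, G.laplacian u v * (G.treeCount v : ℤ) = 0
  calc ∑ v, G.laplacian u v * (G.treeCount v : ℤ)
      = ∑ v, ((if u = v then (G.outdeg v : ℤ) * G.treeCount v else 0)
          - (G.edgeCount v u : ℤ) * G.treeCount v) :=
        Finset.sum_congr rfl (fun v _ => by unfold Multigraph.laplacian; split <;> ring)
    _ = (∑ v, if u = v then (G.outdeg v : ℤ) * G.treeCount v else 0)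
          - ∑ v, (G.edgeCount v u : ℤ) * G.treeCount v := Finset.sum_sub_distrib _ _
    _ = 0 := by
        rw [Finset.sum_ite_eq]
        simp only [Finset.mem_univ, if_true, sub_eq_zero]
        exact_mod_cast hkey
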